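/- Let π be a random probability sequence, T a size-biased index for π, and T₂ a second size-biased index. Then for every measurable function g : (0,1]×(0,1] → [0,∞], extended by g(x,y) = 0 when x = 0 or y = 0, one has E[ Σᵢ Σ_{j ≠ i} g(πᵢ, πⱼ) ] = E[ g(π_T, π_{T₂}) · (1 − π_T) / (π_T π_{T₂}) ], with both sides interpreted in [0,∞]. -/

import Mathlib

open MeasureTheory ENNReal

/-- **Second size-biased sampling identity.** Let `w` be a random probability sequence, `T` a
size-biased index for `w` (i.e. `P(T = i | w) = wᵢ`), and `T₂` a second size-biased index
(i.e. `P(T₂ = j | w, T) = wⱼ/(1 − w_T)` for `j ≠ T`, and `P(T₂ = T | w, T) = 0`). Then for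
every measurable `g : (0,1]² → [0,∞]`, extended by `g x y = 0` when `x = 0` or `y = 0`,
`E[∑ᵢ ∑_{j≠i} g(wᵢ, wⱼ)] = E[g(w_T, w_{T₂}) (1 − w_T)/(w_T w_{T₂})]`,
both sides interpreted in `[0,∞]`. -/
theorem second_sizeBiased_expectation {Ω : Type*} [MeasurableSpace Ω]
    (μ : Measure Ω) [IsProbabilityMeasure μ]
    (w : Ω → ℕ → ℝ) (T T₂ : Ω → ℕ)
    (hw : Measurable w) (hT : Measurable T) (hT₂ : Measurable T₂)
    (hnn : ∀ᵐ ω ∂μ, ∀ i, 0 ≤ w ω i)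
    (hsum : ∀ᵐ ω ∂μ, ∑' i, w ω i = 1)
    (hsb : ∀ i : ℕ, ∀ g : (ℕ → ℝ) → ℝ≥0∞, Measurable g →
      ∫⁻ ω in {ω | T ω = i}, g (w ω) ∂μ = ∫⁻ ω, ENNReal.ofReal (w ω i) * g (w ω) ∂μ)
    (hne : ∀ᵐ ω ∂μ, T₂ ω ≠ T ω)
    (hsb2 : ∀ i j : ℕ, j ≠ i → ∀ g : (ℕ → ℝ) → ℝ≥0∞, Measurable g →
      ∫⁻ ω in {ω | T ω = i ∧ T₂ ω = j}, g (w ω) ∂μ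
        = ∫⁻ ω in {ω | T ω = i}, ENNReal.ofReal (w ω j / (1 - w ω i)) * g (w ω) ∂μ)
    (g : ℝ → ℝ → ℝ≥0∞) (hg : Measurable (Function.uncurry g))
    (hg0 : ∀ x y : ℝ, x = 0 ∨ y = 0 → g x y = 0) :
    ∫⁻ ω, ∑' i, ∑' j, (if j = i then 0 else g (w ω i) (w ω j)) ∂μ
      = ∫⁻ ω, g (w ω (T ω)) (w ω (T₂ ω)) * ENNReal.ofReal (1 - w ω (T ω))
          / (ENNReal.ofReal (w ω (T ω)) * ENNReal.ofReal (w ω (T₂ ω))) ∂μ := by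
  classical
  -- the function appearing on the RHS, as a function of the weight sequence
  set G : ℕ → ℕ → (ℕ → ℝ) → ℝ≥0∞ := fun i j v =>
    g (v i) (v j) * ENNReal.ofReal (1 - v i)
      / (ENNReal.ofReal (v i) * ENNReal.ofReal (v j)) with hG
  have hgij : ∀ i j : ℕ, Measurable fun v : ℕ → ℝ => g (v i) (v j) := by
    intro i j
    have : (fun v : ℕ → ℝ => g (v i) (v j))
        = Function.uncurry g ∘ fun v => (v i, v j) := rfl
    rw [this]
    exact hg.comp ((measurable_pi_apply i).prodMk (measurable_pi_apply j))
  have hGm : ∀ i j, Measurable (G i j) := by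
    intro i j
    exact ((hgij i j).mul
      (ENNReal.measurable_ofReal.comp (measurable_const.sub (measurable_pi_apply i)))).div
      ((ENNReal.measurable_ofReal.comp (measurable_pi_apply i)).mul
        (ENNReal.measurable_ofReal.comp (measurable_pi_apply j)))
  -- ENNReal algebra key
  have key : ∀ (A B C x : ℝ≥0∞), A ≠ 0 → A ≠ ⊤ → B ≠ 0 → B ≠ ⊤ → C ≠ 0 → C ≠ ⊤ →
      A * (B / C * (x * C / (A * B))) = x := by
    intro A B C x hA hA' hB hB' hC hC'
    rw [div_eq_mul_inv, div_eq_mul_inv, ENNReal.mul_inv (Or.inl hA) (Or.inl hA')]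
    calc A * (B * C⁻¹ * (x * C * (A⁻¹ * B⁻¹)))
        = x * (A * A⁻¹ * (B * B⁻¹) * (C⁻¹ * C)) := by ring
      _ = x := by
          rw [ENNReal.mul_inv_cancel hA hA', ENNReal.mul_inv_cancel hB hB',
            ENNReal.inv_mul_cancel hC hC']; simp
  -- the a.e. pointwise identity
  have hae : ∀ᵐ ω ∂μ, ∀ i j : ℕ, j ≠ i →
      ENNReal.ofReal (w ω i) * (ENNReal.ofReal (w ω j / (1 - w ω i)) * G i j (w ω))
        = g (w ω i) (w ω j) := by
    filter_upwards [hnn, hsum] with ω hn hs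
    intro i j hji
    rcases eq_or_lt_of_le (hn i) with hi | hi
    · simp [hG, ← hi, hg0 0 (w ω j) (Or.inl rfl)]
    rcases eq_or_lt_of_le (hn j) with hj | hj
    · simp [hG, ← hj, hg0 (w ω i) 0 (Or.inr rfl)]
    have hsumm : Summable (w ω) := by
      by_contra h
      rw [tsum_eq_zero_of_not_summable h] at hs; norm_num at hs
    have hab : w ω i + w ω j ≤ 1 := by
      have h1 : ∑ k ∈ ({i, j} : Finset ℕ), w ω k ≤ ∑' k, w ω k :=
        Summable.sum_le_tsum _ (fun k _ => hn k) hsumm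
      rwa [Finset.sum_pair (Ne.symm hji), hs] at h1
    have hc : (0:ℝ) < 1 - w ω i := by linarith
    rw [hG, ENNReal.ofReal_div_of_pos hc]
    exact key _ _ _ _ (ne_of_gt (ENNReal.ofReal_pos.2 hi)) ENNReal.ofReal_ne_top
      (ne_of_gt (ENNReal.ofReal_pos.2 hj)) ENNReal.ofReal_ne_top
      (ne_of_gt (ENNReal.ofReal_pos.2 hc)) ENNReal.ofReal_ne_top
  -- partition lemma
  have hpart : ∀ (ν : Measure Ω) (F : Ω → ℝ≥0∞) (S : Ω → ℕ), Measurable S →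
      ∫⁻ ω, F ω ∂ν = ∑' i, ∫⁻ ω in {ω | S ω = i}, F ω ∂ν := by
    intro ν F S hS
    have h1 : (Set.univ : Set Ω) = ⋃ i, {ω | S ω = i} := by
      ext ω; simp
    have hm : ∀ i : ℕ, MeasurableSet {ω | S ω = i} := fun i => hS (measurableSet_singleton i)
    rw [← setLIntegral_univ, h1, lintegral_iUnion hm]
    intro i j hij
    simp only [Function.onFun, Set.disjoint_left]
    intro ω h1 h2
    exact hij (h1.symm.trans h2)
  set F : Ω → ℝ≥0∞ := fun ω =>
    g (w ω (T ω)) (w ω (T₂ ω)) * ENNReal.ofReal (1 - w ω (T ω))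
      / (ENNReal.ofReal (w ω (T ω)) * ENNReal.ofReal (w ω (T₂ ω))) with hF
  have hmTi : ∀ i : ℕ, MeasurableSet {ω | T ω = i} := fun i => hT (measurableSet_singleton i)
  have hmTij : ∀ i j : ℕ, MeasurableSet {ω | T ω = i ∧ T₂ ω = j} := by
    intro i j
    have : {ω | T ω = i ∧ T₂ ω = j} = {ω | T ω = i} ∩ {ω | T₂ ω = j} := rfl
    rw [this]; exact (hmTi i).inter (hT₂ (measurableSet_singleton j))
  -- RHS decomposition
  have hRHS : ∫⁻ ω, F ω ∂μ
      = ∑' i, ∑' j, ∫⁻ ω in {ω | T ω = i ∧ T₂ ω = j}, F ω ∂μ := by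
    rw [hpart μ F T hT]
    congr 1; ext i
    rw [hpart (μ.restrict {ω | T ω = i}) F T₂ hT₂]
    congr 1; ext j
    have hm2 : MeasurableSet {ω | T₂ ω = j} := hT₂ (measurableSet_singleton j)
    rw [Measure.restrict_restrict hm2,
      show {ω | T₂ ω = j} ∩ {ω | T ω = i} = {ω | T ω = i ∧ T₂ ω = j} from
        by ext ω; exact and_comm]
  -- per-term evaluation of RHS
  have hterm : ∀ i j : ℕ, ∫⁻ ω in {ω | T ω = i ∧ T₂ ω = j}, F ω ∂μ
      = if j = i then 0 else ∫⁻ ω, g (w ω i) (w ω j) ∂μ := by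
    intro i j
    by_cases hji : j = i
    · subst hji
      simp only [if_pos rfl]
      apply setLIntegral_measure_zero
      have h0 : μ {a | ¬ T₂ a ≠ T a} = 0 := ae_iff.1 hne
      refine measure_mono_null ?_ h0
      intro ω hω
      simp only [Set.mem_setOf_eq, not_not]
      exact hω.2.trans hω.1.symm
    · rw [if_neg hji]
      have h1 : ∫⁻ ω in {ω | T ω = i ∧ T₂ ω = j}, F ω ∂μ
          = ∫⁻ ω in {ω | T ω = i ∧ T₂ ω = j}, G i j (w ω) ∂μ := by
        apply setLIntegral_congr_fun (hmTij i j)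
        intro ω hω
        simp [hF, hG, hω.1, hω.2]
      rw [h1, hsb2 i j hji (G i j) (hGm i j)]
      have h2 : Measurable fun v : ℕ → ℝ =>
          ENNReal.ofReal (v j / (1 - v i)) * G i j v :=
        (ENNReal.measurable_ofReal.comp
          ((measurable_pi_apply j).div (measurable_const.sub (measurable_pi_apply i)))).mul
          (hGm i j)
      rw [hsb i _ h2]
      apply lintegral_congr_ae
      filter_upwards [hae] with ω h
      exact h i j hji
  -- LHS decomposition
  have hmf : ∀ i j : ℕ, Measurable fun ω =>
      (if j = i then 0 else g (w ω i) (w ω j)) := by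
    intro i j
    by_cases hji : j = i
    · simp [hji]
    · simp only [if_neg hji]; exact (hgij i j).comp hw
  have hLHS : ∫⁻ ω, ∑' i, ∑' j, (if j = i then 0 else g (w ω i) (w ω j)) ∂μ
      = ∑' i, ∑' j, if j = i then 0 else ∫⁻ ω, g (w ω i) (w ω j) ∂μ := by
    rw [lintegral_tsum (fun i => (Measurable.ennreal_tsum (fun j => hmf i j)).aemeasurable)]
    congr 1; ext i
    rw [lintegral_tsum (fun j => (hmf i j).aemeasurable)]
    congr 1; ext j
    by_cases hji : j = i
    · simp [hji]
    · simp [hji]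
  rw [hLHS, hRHS]
  congr 1; ext i; congr 1; ext j
  exact (hterm i j).symm
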